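/- Split-exactness: Let F be a functor from the category BanAlg of Banach algebras and continuous homomorphisms into an additive category, and assume F is homotopy invariant and half-exact for semi-split extensions. Then F is split-exact: for every extension B ↣^i D ↠^π A of Banach algebras admitting a continuous homomorphism σ : A → D with π∘σ = id_A, the morphism F(i) ⊕ F(σ) : F(B) ⊕ F(A) → F(D) (from the biproduct, with components F(i) and F(σ)) is an isomorphism. -/

import Mathlib

set_option linter.unusedSectionVars false
noncomputable section
open scoped unitInterval

section Vanish
variable (X : Type) [TopologicalSpace X] (A : Type) [NonUnitalNormedRing A] [NormedSpace ℂ A]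
  [IsScalarTower ℂ A A] [SMulCommClass ℂ A A]

/-- The subalgebra of continuous functions vanishing on `Y`. -/
def vanishAlg (Y : Set X) : NonUnitalSubalgebra ℂ C(X, A) where
  carrier := {f | ∀ y ∈ Y, f y = 0}
  add_mem' hf hg y hy := by simp [hf y hy, hg y hy]
  zero_mem' y hy := rfl
  mul_mem' hf hg y hy := by simp [hg y hy]
  smul_mem' c f hf y hy := by simp [hf y hy]

variable {X A}

@[simp] lemma mem_vanishAlg {Y : Set X} {f : C(X, A)} :
    f ∈ vanishAlg X A Y ↔ ∀ y ∈ Y, f y = 0 := Iff.rfl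

lemma isClosed_vanishAlg (Y : Set X) : IsClosed ((vanishAlg X A Y : Set C(X, A))) := by
  have : (vanishAlg X A Y : Set C(X, A)) = ⋂ y ∈ Y, {f : C(X, A) | f y = 0} := by
    ext f; simp [Set.mem_iInter]
  rw [this]
  exact isClosed_biInter fun y _ =>
    isClosed_eq (continuous_eval_const y) continuous_const

end Vanish

section Susp
variable (A : Type) [NonUnitalNormedRing A] [NormedSpace ℂ A] [IsScalarTower ℂ A A] [SMulCommClass ℂ A A]

/-- `ΣA`, the suspension of `A`: continuous functions on `[0,1]` vanishing at both endpoints. -/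
def suspAlg : NonUnitalSubalgebra ℂ C(unitInterval, A) := vanishAlg unitInterval A {0, 1}

variable {A} {B : Type} [NonUnitalNormedRing B] [NormedSpace ℂ B] [IsScalarTower ℂ B B] [SMulCommClass ℂ B B]

lemma susp_apply_zero (f : suspAlg A) : f.1 0 = 0 := f.2 0 (Set.mem_insert _ _)
lemma susp_apply_one (f : suspAlg A) : f.1 1 = 0 := f.2 1 (Set.mem_insert_of_mem _ rfl)

/-- Postcomposition with a continuous homomorphism. -/
def postcompHom (φ : A →ₙₐ[ℂ] B) (hφ : Continuous φ) :
    C(unitInterval, A) →ₙₐ[ℂ] C(unitInterval, B) where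
  toFun f := (⟨⇑φ, hφ⟩ : C(A, B)).comp f
  map_smul' c f := by ext t; simp
  map_zero' := by ext t; simp
  map_add' f g := by ext t; simp
  map_mul' f g := by ext t; simp

@[simp] lemma postcompHom_apply (φ : A →ₙₐ[ℂ] B) (hφ : Continuous φ) (f : C(unitInterval, A))
    (t : unitInterval) : postcompHom φ hφ f t = φ (f t) := rfl

/-- `Σφ`, the suspension of a continuous homomorphism `φ`. -/
def suspMap (φ : A →ₙₐ[ℂ] B) (hφ : Continuous φ) : suspAlg A →ₙₐ[ℂ] suspAlg B where
  toFun f := ⟨postcompHom φ hφ f.1, by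
    rintro y (rfl | rfl)
    · simp [susp_apply_zero f]
    · simp [susp_apply_one f]⟩
  map_smul' c f := by apply Subtype.ext; exact map_smul (postcompHom φ hφ) c f.1
  map_zero' := by apply Subtype.ext; exact map_zero (postcompHom φ hφ)
  map_add' f g := by apply Subtype.ext; exact map_add (postcompHom φ hφ) f.1 g.1
  map_mul' f g := by apply Subtype.ext; exact map_mul (postcompHom φ hφ) f.1 g.1

@[simp] lemma suspMap_apply (φ : A →ₙₐ[ℂ] B) (hφ : Continuous φ) (f : suspAlg A) (t : unitInterval) :
    ((suspMap φ hφ f : suspAlg B) : C(unitInterval, B)) t = φ (f.1 t) := rfl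

lemma continuous_suspMap (φ : A →ₙₐ[ℂ] B) (hφ : Continuous φ) : Continuous (suspMap φ hφ) := by
  apply Continuous.subtype_mk
  exact (ContinuousMap.continuous_postcomp _).comp continuous_subtype_val

end Susp

section MappingCone
variable {D A : Type}
  [NonUnitalNormedRing D] [NormedSpace ℂ D] [IsScalarTower ℂ D D] [SMulCommClass ℂ D D]
  [NonUnitalNormedRing A] [NormedSpace ℂ A] [IsScalarTower ℂ A A] [SMulCommClass ℂ A A]

/-- The mapping cone `C_π = {(c, d) ∈ CA × D : c(1) = 0, c(0) = π(d)}` of `π : D → A`,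
as a closed subalgebra of `C([0,1], A) × D` (with the maximum norm). -/
def mappingCone (π : D →ₙₐ[ℂ] A) : NonUnitalSubalgebra ℂ (C(unitInterval, A) × D) where
  carrier := {p | p.1 1 = 0 ∧ p.1 0 = π p.2}
  add_mem' := by
    rintro p q ⟨hp1, hp0⟩ ⟨hq1, hq0⟩
    exact ⟨by simp [hp1, hq1], by simp [hp0, hq0]⟩
  zero_mem' := ⟨rfl, by simp⟩
  mul_mem' := by
    rintro p q ⟨hp1, hp0⟩ ⟨hq1, hq0⟩
    exact ⟨by simp [hp1, hq1], by simp [hp0, hq0]⟩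
  smul_mem' := by
    rintro c p ⟨hp1, hp0⟩
    exact ⟨by simp [hp1], by simp [hp0]⟩

@[simp] lemma mem_mappingCone {π : D →ₙₐ[ℂ] A} {p : C(unitInterval, A) × D} :
    p ∈ mappingCone π ↔ p.1 1 = 0 ∧ p.1 0 = π p.2 := Iff.rfl

lemma isClosed_mappingCone (π : D →ₙₐ[ℂ] A) (hπ : Continuous π) :
    IsClosed ((mappingCone π : Set (C(unitInterval, A) × D))) := by
  have h1 : IsClosed {p : C(unitInterval, A) × D | p.1 1 = 0} :=
    isClosed_eq ((continuous_eval_const 1).comp continuous_fst) continuous_const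
  have h2 : IsClosed {p : C(unitInterval, A) × D | p.1 0 = π p.2} :=
    isClosed_eq ((continuous_eval_const 0).comp continuous_fst)
      (hπ.comp continuous_snd)
  exact h1.inter h2

/-- The canonical epimorphism `ε(π) : C_π → D, (c, d) ↦ d`. -/
def coneEps (π : D →ₙₐ[ℂ] A) : mappingCone π →ₙₐ[ℂ] D where
  toFun p := p.1.2
  map_smul' _ _ := rfl
  map_zero' := rfl
  map_add' _ _ := rfl
  map_mul' _ _ := rfl

lemma continuous_coneEps (π : D →ₙₐ[ℂ] A) : Continuous (coneEps π) :=
  continuous_snd.comp continuous_subtype_val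

/-- The canonical inclusion `ι(π) : ΣA → C_π, f ↦ (f, 0)`. -/
def coneIota (π : D →ₙₐ[ℂ] A) : suspAlg A →ₙₐ[ℂ] mappingCone π where
  toFun f := ⟨(f.1, 0), ⟨susp_apply_one f, by simp [susp_apply_zero f]⟩⟩
  map_smul' c f := by apply Subtype.ext; exact Prod.ext (by rfl) (by simp)
  map_zero' := by apply Subtype.ext; exact Prod.ext (by rfl) (by simp)
  map_add' f g := by apply Subtype.ext; exact Prod.ext (by rfl) (by simp)
  map_mul' f g := by apply Subtype.ext; exact Prod.ext (by rfl) (by simp)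

lemma continuous_coneIota (π : D →ₙₐ[ℂ] A) : Continuous (coneIota π) := by
  apply Continuous.subtype_mk
  exact (continuous_subtype_val).prodMk continuous_const

end MappingCone

section Homotopy
/-- Two continuous homomorphisms `φ, ψ : A → B` are homotopic if there is a continuous
homomorphism `H : A → C([0,1], B)` with `ev₀ ∘ H = φ` and `ev₁ ∘ H = ψ`. -/
def NAlgHomotopic {A B : Type} [NonUnitalNonAssocSemiring A] [Module ℂ A] [TopologicalSpace A]
    [NonUnitalNonAssocSemiring B] [Module ℂ B] [TopologicalSpace B] [IsTopologicalSemiring B]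
    [ContinuousConstSMul ℂ B] (φ ψ : A →ₙₐ[ℂ] B) : Prop :=
  ∃ H : A →ₙₐ[ℂ] C(unitInterval, B),
    Continuous H ∧ (∀ a, H a 0 = φ a) ∧ (∀ a, H a 1 = ψ a)
end Homotopy

open CategoryTheory

/-- A bundled (possibly non-unital, possibly degenerate) complex Banach algebra. -/
structure BanAlg : Type 1 where
  carrier : Type
  [nonUnitalNormedRing : NonUnitalNormedRing carrier]
  [normedSpace : NormedSpace ℂ carrier]
  [isScalarTower : IsScalarTower ℂ carrier carrier]
  [smulCommClass : SMulCommClass ℂ carrier carrier]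
  [completeSpace : CompleteSpace carrier]

namespace BanAlg

attribute [instance] nonUnitalNormedRing normedSpace isScalarTower smulCommClass completeSpace

instance : CoeSort BanAlg Type := ⟨carrier⟩

/-- Build a bundled Banach algebra from an unbundled one. -/
def of (A : Type) [NonUnitalNormedRing A] [NormedSpace ℂ A] [IsScalarTower ℂ A A]
    [SMulCommClass ℂ A A] [CompleteSpace A] : BanAlg := ⟨A⟩

/-- The category `BanAlg` of Banach algebras and continuous algebra homomorphisms. -/
instance : Category BanAlg where
  Hom A B := {f : A →ₙₐ[ℂ] B // Continuous f}
  id A := ⟨NonUnitalAlgHom.id ℂ A, continuous_id⟩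
  comp f g := ⟨g.1.comp f.1, g.2.comp f.2⟩
  id_comp f := Subtype.ext (by ext x; rfl)
  comp_id f := Subtype.ext (by ext x; rfl)
  assoc f g h := Subtype.ext (by ext x; rfl)

/-- A closed subalgebra of a Banach algebra is a Banach algebra. -/
def ofSubalg {R : Type} [NonUnitalNormedRing R] [NormedSpace ℂ R] [IsScalarTower ℂ R R]
    [SMulCommClass ℂ R R] [CompleteSpace R] (S : NonUnitalSubalgebra ℂ R)
    (hS : IsClosed (S : Set R)) : BanAlg :=
  letI : CompleteSpace S := hS.completeSpace_coe
  letI : NormedSpace ℂ S := SubmoduleClass.toNormedSpace S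
  BanAlg.of S

end BanAlg

/-- The suspension, as an object of `BanAlg`. -/
def suspObj (A : BanAlg) : BanAlg := BanAlg.ofSubalg (suspAlg A) (isClosed_vanishAlg _)

/-- The suspension of a morphism of `BanAlg`. -/
def suspHom {A B : BanAlg} (f : A ⟶ B) : suspObj A ⟶ suspObj B :=
  ⟨suspMap f.1 f.2, continuous_suspMap f.1 f.2⟩

/-- The suspension functor `Σ : BanAlg ⥤ BanAlg`. -/
def suspFunctor : BanAlg ⥤ BanAlg where
  obj := suspObj
  map := suspHom
  map_id := by
    intro A
    apply Subtype.ext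
    apply NonUnitalAlgHom.ext
    intro f
    apply Subtype.ext
    ext t
    rfl
  map_comp := by
    intro A B C f g
    apply Subtype.ext
    apply NonUnitalAlgHom.ext
    intro x
    apply Subtype.ext
    ext t
    rfl

/-- The mapping cone of a morphism of `BanAlg`, as an object of `BanAlg`. -/
def coneObj {D A : BanAlg} (π : D ⟶ A) : BanAlg :=
  BanAlg.ofSubalg (mappingCone π.1) (isClosed_mappingCone π.1 π.2)

/-- The canonical inclusion `ι(π) : ΣA → C_π`, as a morphism of `BanAlg`. -/
def coneIotaHom {D A : BanAlg} (π : D ⟶ A) : suspObj A ⟶ coneObj π :=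
  ⟨coneIota π.1, continuous_coneIota π.1⟩

/-- Extensions of Banach algebras: `i` is injective with closed range, `π` is surjective,
and `range i = ker π`. -/
structure IsExtensionHom {B D A : BanAlg} (i : B ⟶ D) (π : D ⟶ A) : Prop where
  inj : Function.Injective i.1
  closedRange : IsClosed (Set.range i.1)
  surj : Function.Surjective π.1
  exact : Set.range i.1 = {d | π.1 d = 0}

/-- A (quotient map of an) extension is semi-split if it admits a continuous linear
(not necessarily multiplicative) section. -/
def IsSemiSplit {D A : BanAlg} (π : D ⟶ A) : Prop :=
  ∃ s : A.carrier →L[ℂ] D.carrier, ∀ a, π.1 (s a) = a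

/-- The canonical comparison morphism `κ_π : B → C_π`, `b ↦ (0, i(b))`. -/
def coneKappaHom {B D A : BanAlg} (i : B ⟶ D) (π : D ⟶ A) (hext : IsExtensionHom i π) :
    B ⟶ coneObj π := by
  have hker : ∀ b, (0 : A.carrier) = π.1 (i.1 b) := by
    intro b
    have : i.1 b ∈ {d | π.1 d = 0} := hext.exact ▸ Set.mem_range_self b
    exact this.symm
  refine ⟨{ toFun := fun b => ⟨((0 : C(unitInterval, A.carrier)), i.1 b), ⟨rfl, hker b⟩⟩,
            map_smul' := ?_, map_zero' := ?_, map_add' := ?_, map_mul' := ?_ }, ?_⟩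
  · intro c b
    apply Subtype.ext
    refine Prod.ext ?_ ?_
    · simp only [map_smul]; exact (smul_zero c).symm
    · simp only [map_smul]; rfl
  · apply Subtype.ext; exact Prod.ext (by simp <;> rfl) (by simp <;> rfl)
  · intro a b
    apply Subtype.ext
    refine Prod.ext ?_ ?_
    · simp only [map_add]; exact (add_zero 0).symm
    · simp only [map_add]; rfl
  · intro a b
    apply Subtype.ext
    refine Prod.ext ?_ ?_
    · simp only [map_mul]; exact (mul_zero 0).symm
    · simp only [map_mul]; rfl
  · exact Continuous.subtype_mk (continuous_const.prodMk (i.2.comp continuous_id)) _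

/-- A functor on `BanAlg` is homotopy invariant if it identifies homotopic morphisms. -/
def HomotopyInvariant {𝒞 : Type*} [Category 𝒞] (F : BanAlg ⥤ 𝒞) : Prop :=
  ∀ (A B : BanAlg) (f g : A ⟶ B), NAlgHomotopic f.1 g.1 → F.map f = F.map g

/-- A functor on `BanAlg` with values in an additive category is half-exact for semi-split
extensions if, for every object `X` and every semi-split extension `B ↣ D ↠ A`, the
sequences of abelian groups `Hom(X,F(B)) → Hom(X,F(D)) → Hom(X,F(A))` and
`Hom(F(A),X) → Hom(F(D),X) → Hom(F(B),X)` are exact in the middle. -/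
def HalfExactFunctor {𝒞 : Type*} [Category 𝒞] [Preadditive 𝒞] (F : BanAlg ⥤ 𝒞) : Prop :=
  ∀ (B D A : BanAlg) (i : B ⟶ D) (π : D ⟶ A), IsExtensionHom i π → IsSemiSplit π →
    ∀ X : 𝒞,
      Function.Exact (fun u : X ⟶ F.obj B => u ≫ F.map i)
        (fun u : X ⟶ F.obj D => u ≫ F.map π) ∧
      Function.Exact (fun u : F.obj A ⟶ X => F.map π ≫ u)
        (fun u : F.obj D ⟶ X => F.map i ≫ u)

/-- A functor on `BanAlg` with values in an additive category is split-exact if for every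
split extension `B ↣ D ↠ A` with multiplicative continuous section `σ`, the induced map
`F(B) ⊕ F(A) → F(D)` is an isomorphism. -/
def SplitExactFunctor {𝒞 : Type*} [Category 𝒞] [Preadditive 𝒞]
    [Limits.HasBinaryBiproducts 𝒞] (F : BanAlg ⥤ 𝒞) : Prop :=
  ∀ (B D A : BanAlg) (i : B ⟶ D) (π : D ⟶ A) (s : A ⟶ D),
    IsExtensionHom i π → s ≫ π = 𝟙 A →
    IsIso (Limits.biprod.desc (F.map i) (F.map s))

/-! ### Auxiliary material for the proof -/

namespace SEP

open ContinuousMap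

/-- The reparametrization `(u, t) ↦ u + t(1-u)`. -/
noncomputable def rline : C(unitInterval × unitInterval, unitInterval) :=
  ⟨fun p => ⟨p.1.1 + p.2.1 * (1 - p.1.1), by
      constructor
      · nlinarith [p.1.2.1, p.1.2.2, p.2.2.1, p.2.2.2]
      · nlinarith [p.1.2.1, p.1.2.2, p.2.2.1, p.2.2.2]⟩,
    by
      apply Continuous.subtype_mk
      exact (continuous_subtype_val.comp continuous_fst).add
        ((continuous_subtype_val.comp continuous_snd).mul
          (continuous_const.sub (continuous_subtype_val.comp continuous_fst)))⟩

/-- The reparametrization `(u, t) ↦ t(1-u)`. -/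
noncomputable def rmul : C(unitInterval × unitInterval, unitInterval) :=
  ⟨fun p => ⟨p.2.1 * (1 - p.1.1), by
      constructor
      · nlinarith [p.1.2.1, p.1.2.2, p.2.2.1, p.2.2.2]
      · nlinarith [p.1.2.1, p.1.2.2, p.2.2.1, p.2.2.2]⟩,
    by
      apply Continuous.subtype_mk
      exact (continuous_subtype_val.comp continuous_snd).mul
        (continuous_const.sub (continuous_subtype_val.comp continuous_fst))⟩

@[simp] lemma rline_zero_left (t : unitInterval) : rline (0, t) = t :=
  Subtype.ext (by simp [rline])

@[simp] lemma rline_one_left (t : unitInterval) : rline (1, t) = 1 :=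
  Subtype.ext (by simp [rline])

@[simp] lemma rline_zero_right (u : unitInterval) : rline (u, 0) = u :=
  Subtype.ext (by simp [rline])

@[simp] lemma rline_one_right (u : unitInterval) : rline (u, 1) = 1 :=
  Subtype.ext (by simp [rline])

@[simp] lemma rmul_zero_left (t : unitInterval) : rmul (0, t) = t :=
  Subtype.ext (by simp [rmul])

@[simp] lemma rmul_one_left (t : unitInterval) : rmul (1, t) = 0 :=
  Subtype.ext (by simp [rmul])

@[simp] lemma rmul_zero_right (u : unitInterval) : rmul (u, 0) = 0 :=
  Subtype.ext (by simp [rmul])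

section LineTo

variable {E : Type} [NonUnitalNormedRing E] [NormedSpace ℂ E]

/-- The linear path from `v` to `0`. -/
noncomputable def lineTo (v : E) : C(unitInterval, E) :=
  ⟨fun t => (((1 : ℝ) - (t : ℝ) : ℝ) : ℂ) • v, by
    apply Continuous.smul _ continuous_const
    exact Complex.continuous_ofReal.comp (continuous_const.sub continuous_subtype_val)⟩

@[simp] lemma lineTo_apply (v : E) (t : unitInterval) :
    lineTo v t = (((1 : ℝ) - (t : ℝ) : ℝ) : ℂ) • v := rfl

@[simp] lemma lineTo_zero (v : E) : lineTo v 0 = v := by simp [lineTo]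

@[simp] lemma lineTo_one (v : E) : lineTo v 1 = 0 := by simp [lineTo]

lemma lineTo_add (v w : E) : lineTo (v + w) = lineTo v + lineTo w := by
  ext t; simp [smul_add]

lemma lineTo_smul (c : ℂ) (v : E) : lineTo (c • v) = c • lineTo v := by
  ext t; simp [smul_smul, mul_comm]

lemma continuous_lineTo : Continuous fun v : E => lineTo v := by
  apply ContinuousMap.continuous_of_continuous_uncurry
  exact Continuous.smul
    ((Complex.continuous_ofReal.comp
      (continuous_const.sub continuous_subtype_val)).comp continuous_snd)
    continuous_fst

end LineTo

/-- The trivial Banach algebra, realized as the zero subalgebra of `ℂ`. -/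
def zeroSubalg : NonUnitalSubalgebra ℂ ℂ where
  carrier := {0}
  add_mem' := by rintro a b ha hb; simp_all
  zero_mem' := rfl
  mul_mem' := by rintro a b ha hb; simp_all
  smul_mem' := by rintro c x hx; simp_all

/-- The trivial Banach algebra as an object of `BanAlg`. -/
noncomputable def zeroBan : BanAlg := BanAlg.ofSubalg zeroSubalg isClosed_singleton

instance : Subsingleton zeroBan.carrier :=
  ⟨fun a b => Subtype.ext (a.2.trans b.2.symm)⟩

/-- The zero morphism between objects of `BanAlg`. -/
def zeroMor (P Q : BanAlg) : P ⟶ Q :=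
  ⟨{ toFun := fun _ => 0
     map_smul' := by intro c x; simp
     map_zero' := rfl
     map_add' := by intro x y; simp
     map_mul' := by intro x y; simp }, continuous_const⟩

@[simp] lemma zeroMor_apply (P Q : BanAlg) (x : P.carrier) : (zeroMor P Q).1 x = 0 := rfl

open CategoryTheory in
lemma map_zeroMor {𝒞 : Type*} [Category 𝒞] [Preadditive 𝒞] (F : BanAlg ⥤ 𝒞)
    (hhe : HalfExactFunctor F) (P Q : BanAlg) : F.map (zeroMor P Q) = 0 := by
  haveI : Nonempty zeroBan.carrier := ⟨0⟩
  have hrange : Set.range (zeroMor zeroBan Q).1 = {(0 : Q.carrier)} := Set.range_const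
  have hext : IsExtensionHom (zeroMor zeroBan Q) (𝟙 Q) := by
    constructor
    · intro a b _; exact Subsingleton.elim a b
    · rw [hrange]; exact isClosed_singleton
    · exact fun q => ⟨q, rfl⟩
    · rw [hrange]; ext d; simp; rfl
  have hss : IsSemiSplit (𝟙 Q) := ⟨ContinuousLinearMap.id ℂ Q.carrier, fun a => rfl⟩
  have h := (hhe zeroBan Q Q _ _ hext hss (F.obj zeroBan)).1
  have h0 : F.map (zeroMor zeroBan Q) = 0 := by
    have := (h (F.map (zeroMor zeroBan Q))).2 ⟨𝟙 _, Category.id_comp _⟩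
    simpa [F.map_id] using this
  have hfac : zeroMor P Q = zeroMor P zeroBan ≫ zeroMor zeroBan Q := by
    apply Subtype.ext; ext x; rfl
  rw [hfac, F.map_comp, h0, Limits.comp_zero]

open CategoryTheory in
lemma map_eq_zero_of_zero {𝒞 : Type*} [Category 𝒞] [Preadditive 𝒞] (F : BanAlg ⥤ 𝒞)
    (hhe : HalfExactFunctor F) {P Q : BanAlg} (g : P ⟶ Q) (hg : ∀ x, g.1 x = 0) :
    F.map g = 0 := by
  have : g = zeroMor P Q := by apply Subtype.ext; ext x; exact hg x
  rw [this]; exact map_zeroMor F hhe P Q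

section Main

open CategoryTheory

variable {B D A : BanAlg} (i : B ⟶ D) (π : D ⟶ A) (s : A ⟶ D)

lemma pi_i_zero (hext : IsExtensionHom i π) (b : B.carrier) : π.1 (i.1 b) = 0 := by
  have : i.1 b ∈ {d | π.1 d = 0} := hext.exact ▸ Set.mem_range_self b
  exact this

/-- The algebra of paths in `D` ending in `ker π`. -/
def YSub : NonUnitalSubalgebra ℂ C(unitInterval, D.carrier) where
  carrier := {f | π.1 (f 1) = 0}
  add_mem' := by
    intro f g hf hg
    simp only [Set.mem_setOf_eq, ContinuousMap.add_apply, map_add] at *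
    simp [hf, hg]
  zero_mem' := by simp
  mul_mem' := by
    intro f g hf hg
    simp only [Set.mem_setOf_eq, ContinuousMap.mul_apply, map_mul] at *
    simp [hf, hg]
  smul_mem' := by
    intro c f hf
    simp only [Set.mem_setOf_eq, ContinuousMap.smul_apply, map_smul] at *
    simp [hf]

/-- The algebra of paths in `ker π` starting at `0`. -/
def KSub : NonUnitalSubalgebra ℂ C(unitInterval, D.carrier) where
  carrier := {f | f 0 = 0 ∧ ∀ t, π.1 (f t) = 0}
  add_mem' := by
    intro f g hf hg
    exact ⟨by simp [hf.1, hg.1], fun t => by simp [map_add, hf.2 t, hg.2 t]⟩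
  zero_mem' := ⟨rfl, fun t => by simp⟩
  mul_mem' := by
    intro f g hf hg
    exact ⟨by simp [hf.1, hg.1], fun t => by simp [map_mul, hf.2 t, hg.2 t]⟩
  smul_mem' := by
    intro c f hf
    exact ⟨by simp [hf.1], fun t => by simp [map_smul, hf.2 t]⟩

lemma isClosed_YSub : IsClosed ((YSub π : Set C(unitInterval, D.carrier))) :=
  isClosed_eq (π.2.comp (continuous_eval_const 1)) continuous_const

lemma isClosed_KSub : IsClosed ((KSub π : Set C(unitInterval, D.carrier))) := by
  have : (KSub π : Set C(unitInterval, D.carrier)) =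
      {f : C(unitInterval, D.carrier) | f 0 = 0} ∩
        ⋂ t, {f : C(unitInterval, D.carrier) | π.1 (f t) = 0} := by
    ext f
    simp only [KSub, Set.mem_iInter, Set.mem_inter_iff, Set.mem_setOf_eq,
      SetLike.mem_coe]
    exact Iff.rfl
  rw [this]
  exact (isClosed_eq (continuous_eval_const 0) continuous_const).inter
    (isClosed_iInter fun t =>
      isClosed_eq (π.2.comp (continuous_eval_const t)) continuous_const)

/-- `Y`, the mapping-cylinder-type algebra, as an object of `BanAlg`. -/
noncomputable def Yobj : BanAlg := BanAlg.ofSubalg (YSub π) (isClosed_YSub π)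

/-- `K`, as an object of `BanAlg`. -/
noncomputable def Kobj : BanAlg := BanAlg.ofSubalg (KSub π) (isClosed_KSub π)

/-- The canonical epimorphism `ε : C_π → D`, as a morphism of `BanAlg`. -/
noncomputable def epsHom : coneObj π ⟶ D := ⟨coneEps π.1, continuous_coneEps π.1⟩

/-- The morphism `ρ : Y → C_π`, `f ↦ (π ∘ f, f 0)`. -/
noncomputable def rhoHom : Yobj π ⟶ coneObj π := by
  refine ⟨{ toFun := fun f => ⟨(postcompHom π.1 π.2 f.1, f.1 0), ⟨?_, rfl⟩⟩
            map_smul' := ?_, map_zero' := ?_, map_add' := ?_, map_mul' := ?_ }, ?_⟩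
  · exact f.2
  · intro c f
    apply Subtype.ext; refine Prod.ext ?_ ?_
    · show postcompHom π.1 π.2 (c • f.1) = c • postcompHom π.1 π.2 f.1
      exact map_smul _ c f.1
    · rfl
  · apply Subtype.ext; refine Prod.ext ?_ ?_
    · exact map_zero (postcompHom π.1 π.2)
    · rfl
  · intro f g
    apply Subtype.ext; refine Prod.ext ?_ ?_
    · exact map_add (postcompHom π.1 π.2) f.1 g.1
    · rfl
  · intro f g
    apply Subtype.ext; refine Prod.ext ?_ ?_
    · exact map_mul (postcompHom π.1 π.2) f.1 g.1
    · rfl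
  · apply Continuous.subtype_mk
    refine Continuous.prodMk ?_ ?_
    · exact (ContinuousMap.continuous_postcomp _).comp continuous_subtype_val
    · exact (continuous_eval_const 0).comp continuous_subtype_val

/-- The inclusion `K → Y`. -/
noncomputable def inclKHom : Kobj π ⟶ Yobj π := by
  refine ⟨{ toFun := fun f => ⟨f.1, by exact f.2.2 1⟩
            map_smul' := ?_, map_zero' := ?_, map_add' := ?_, map_mul' := ?_ }, ?_⟩
  · intro c f; apply Subtype.ext; rfl
  · apply Subtype.ext; rfl
  · intro f g; apply Subtype.ext; rfl
  · intro f g; apply Subtype.ext; rfl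
  · exact Continuous.subtype_mk continuous_subtype_val _

/-- The inclusion `j : B → Y` by constant paths. -/
noncomputable def jHom (hext : IsExtensionHom i π) : B ⟶ Yobj π := by
  refine ⟨{ toFun := fun b => ⟨ContinuousMap.const _ (i.1 b), by
              show π.1 (i.1 b) = 0
              exact pi_i_zero i π hext b⟩
            map_smul' := ?_, map_zero' := ?_, map_add' := ?_, map_mul' := ?_ }, ?_⟩
  · intro c b; apply Subtype.ext; ext t
    show i.1 (c • b) = c • i.1 b
    exact map_smul i.1 c b
  · apply Subtype.ext; ext t; simp; rfl
  · intro a b; apply Subtype.ext; ext t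
    show i.1 (a + b) = i.1 a + i.1 b
    exact map_add i.1 a b
  · intro a b; apply Subtype.ext; ext t
    show i.1 (a * b) = i.1 a * i.1 b
    exact map_mul i.1 a b
  · exact Continuous.subtype_mk (ContinuousMap.continuous_const'.comp i.2) _

/-- `i` as a continuous linear map. -/
noncomputable def iCLM : B.carrier →L[ℂ] D.carrier :=
  ⟨{ toFun := i.1, map_add' := fun x y => map_add i.1 x y,
     map_smul' := fun c x => map_smul i.1 c x }, i.2⟩

lemma iCLM_coe : ⇑(iCLM i) = ⇑i.1 := rfl

set_option maxHeartbeats 1000000 in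
lemma mem_rangeI (hext : IsExtensionHom i π) {d : D.carrier} (hd : π.1 d = 0) :
    d ∈ (iCLM i).range := by
  have : d ∈ Set.range i.1 := by rw [hext.exact]; exact hd
  obtain ⟨b, hb⟩ := this
  exact ⟨b, hb⟩

/-- The continuous linear equivalence of `B` onto the range of `i`
(via the open mapping theorem). -/
noncomputable def iEquiv (hext : IsExtensionHom i π) :
    B.carrier ≃L[ℂ] (iCLM i).range :=
  (iCLM i).equivRange (by rw [iCLM_coe]; exact hext.inj)
    (by rw [iCLM_coe]; exact hext.closedRange)

set_option maxHeartbeats 1000000 in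
lemma iEquiv_symm_spec (hext : IsExtensionHom i π) (d : D.carrier)
    (hd : d ∈ (iCLM i).range) :
    i.1 ((iEquiv i π hext).symm ⟨d, hd⟩) = d :=
  congrArg Subtype.val ((iEquiv i π hext).apply_symm_apply ⟨d, hd⟩)

set_option maxHeartbeats 1000000 in
/-- Evaluation at `1`, as a morphism `Y → B`. -/
noncomputable def ev1Hom (hext : IsExtensionHom i π) : Yobj π ⟶ B := by
  refine ⟨{ toFun := fun f => (iEquiv i π hext).symm ⟨f.1 1, mem_rangeI i π hext f.2⟩
            map_smul' := ?_, map_zero' := ?_, map_add' := ?_, map_mul' := ?_ }, ?_⟩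
  · intro c f
    apply hext.inj
    rw [iEquiv_symm_spec, map_smul, iEquiv_symm_spec]
    rfl
  · apply hext.inj
    rw [iEquiv_symm_spec, map_zero]
    rfl
  · intro f g
    apply hext.inj
    rw [iEquiv_symm_spec, map_add, iEquiv_symm_spec, iEquiv_symm_spec]
    rfl
  · intro f g
    apply hext.inj
    rw [iEquiv_symm_spec, map_mul, iEquiv_symm_spec, iEquiv_symm_spec]
    rfl
  · exact (iEquiv i π hext).symm.continuous.comp
      (Continuous.subtype_mk
        ((continuous_eval_const 1).comp continuous_subtype_val) _)

lemma apply_ev1 (hext : IsExtensionHom i π) (f : (Yobj π).carrier) :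
    i.1 ((ev1Hom i π hext).1 f) = (f.1 : C(unitInterval, D.carrier)) 1 :=
  iEquiv_symm_spec i π hext _ _

lemma j_comp_ev1 (hext : IsExtensionHom i π) :
    jHom i π hext ≫ ev1Hom i π hext = 𝟙 B := by
  apply Subtype.ext; ext b
  apply hext.inj
  show i.1 ((ev1Hom i π hext).1 ((jHom i π hext).1 b)) = i.1 b
  rw [apply_ev1]
  rfl

lemma j_rho_eps (hext : IsExtensionHom i π) :
    jHom i π hext ≫ rhoHom π ≫ epsHom π = i := by
  apply Subtype.ext; ext b
  rfl

lemma pi_s_id (hs : s ≫ π = 𝟙 A) (a : A.carrier) : π.1 (s.1 a) = a :=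
  DFunLike.congr_fun (congrArg Subtype.val hs) a

/-- `s` as a continuous linear map. -/
noncomputable def sCLM : A.carrier →L[ℂ] D.carrier :=
  ⟨{ toFun := s.1, map_add' := fun x y => map_add s.1 x y,
     map_smul' := fun c x => map_smul s.1 c x }, s.2⟩

lemma semiSplit_pi (hs : s ≫ π = 𝟙 A) : IsSemiSplit π :=
  ⟨sCLM s, fun a => pi_s_id π s hs a⟩

lemma range_iota : Set.range ⇑(coneIotaHom π).1 =
    {p : (coneObj π).carrier | p.1.2 = 0} := by
  ext p
  constructor
  · rintro ⟨f, rfl⟩; rfl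
  · intro hp
    refine ⟨⟨p.1.1, ?_⟩, ?_⟩
    · rintro t (rfl | rfl)
      · rw [p.2.2, hp, map_zero]
      · exact p.2.1
    · apply Subtype.ext
      exact Prod.ext rfl hp.symm

/-- The canonical continuous linear section of `ε : C_π → D`. -/
noncomputable def epsSection : D.carrier →L[ℂ] (coneObj π).carrier := by
  refine ⟨{ toFun := fun d => ⟨(lineTo (π.1 d), d), ⟨lineTo_one _, lineTo_zero _⟩⟩,
            map_add' := ?_, map_smul' := ?_ }, ?_⟩
  · intro x y
    apply Subtype.ext; refine Prod.ext ?_ ?_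
    · show lineTo (π.1 (x + y)) = lineTo (π.1 x) + lineTo (π.1 y)
      rw [map_add, lineTo_add]
    · rfl
  · intro c x
    apply Subtype.ext; refine Prod.ext ?_ ?_
    · show lineTo (π.1 (c • x)) = c • lineTo (π.1 x)
      rw [map_smul, lineTo_smul]
    · rfl
  · apply Continuous.subtype_mk
    exact (continuous_lineTo.comp π.2).prodMk continuous_id

@[simp] lemma epsSection_spec (d : D.carrier) : (epsHom π).1 (epsSection π d) = d := rfl

lemma semiSplit_eps : IsSemiSplit (epsHom π) := ⟨epsSection π, fun d => rfl⟩

lemma ext_eps : IsExtensionHom (coneIotaHom π) (epsHom π) := by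
  constructor
  · intro f g h
    apply Subtype.ext
    exact congrArg (fun p => p.1.1) h
  · rw [range_iota]
    exact isClosed_eq (continuous_snd.comp continuous_subtype_val) continuous_const
  · exact fun d => ⟨epsSection π d, rfl⟩
  · rw [range_iota]; rfl

lemma range_inclK : Set.range ⇑(inclKHom π).1 =
    {y : (Yobj π).carrier | (rhoHom π).1 y = 0} := by
  ext y
  constructor
  · rintro ⟨f, rfl⟩
    show (rhoHom π).1 ((inclKHom π).1 f) = 0
    apply Subtype.ext
    refine Prod.ext ?_ ?_
    · ext t
      exact f.2.2 t
    · exact f.2.1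
  · intro hy
    have hv := congrArg Subtype.val (hy : (rhoHom π).1 y = 0)
    have h1 : (y.1 : C(unitInterval, D.carrier)) 0 = 0 := congrArg Prod.snd hv
    have h2 : ∀ t, π.1 ((y.1 : C(unitInterval, D.carrier)) t) = 0 := by
      intro t
      have := congrArg Prod.fst hv
      exact DFunLike.congr_fun this t
    exact ⟨⟨y.1, ⟨h1, h2⟩⟩, Subtype.ext rfl⟩

/-- The continuous linear section of `ρ : Y → C_π` built from `s`. -/
noncomputable def rhoSection : (coneObj π).carrier →L[ℂ] (Yobj π).carrier := by
  refine ⟨{ toFun := fun p =>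
      ⟨postcompHom s.1 s.2 p.1.1 + lineTo (p.1.2 - s.1 (p.1.1 0)), ?_⟩,
            map_add' := ?_, map_smul' := ?_ }, ?_⟩
  · show π.1 ((postcompHom s.1 s.2 p.1.1 + lineTo (p.1.2 - s.1 (p.1.1 0))) 1) = 0
    rw [ContinuousMap.add_apply, lineTo_one, add_zero, postcompHom_apply, p.2.1,
      map_zero, map_zero]
  · intro x y
    apply Subtype.ext
    ext t
    show s.1 ((x.1.1 + y.1.1) t) + (((1:ℝ) - (t : ℝ) : ℝ) : ℂ) •
        ((x.1.2 + y.1.2) - s.1 ((x.1.1 + y.1.1) 0)) = _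
    simp only [ContinuousMap.add_apply, map_add, smul_sub, smul_add]
    show _ = (s.1 (x.1.1 t) + (((1:ℝ) - (t : ℝ) : ℝ) : ℂ) • (x.1.2 - s.1 (x.1.1 0)))
      + (s.1 (y.1.1 t) + (((1:ℝ) - (t : ℝ) : ℝ) : ℂ) • (y.1.2 - s.1 (y.1.1 0)))
    simp only [smul_sub]
    abel
  · intro c x
    apply Subtype.ext
    ext t
    show s.1 ((c • x.1.1) t) + (((1:ℝ) - (t : ℝ) : ℝ) : ℂ) •
        ((c • x.1.2) - s.1 ((c • x.1.1) 0)) = _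
    show _ = c • (s.1 (x.1.1 t) + (((1:ℝ) - (t : ℝ) : ℝ) : ℂ) • (x.1.2 - s.1 (x.1.1 0)))
    simp only [ContinuousMap.smul_apply, map_smul, smul_sub, smul_add, smul_smul, mul_comm]
  · apply Continuous.subtype_mk
    apply Continuous.add
    · show Continuous fun p : (coneObj π).carrier =>
        (⟨⇑s.1, s.2⟩ : C(A.carrier, D.carrier)).comp p.1.1
      exact (ContinuousMap.continuous_postcomp _).comp
        (continuous_fst.comp continuous_subtype_val)
    · apply continuous_lineTo.comp
      apply Continuous.sub
      · exact continuous_snd.comp continuous_subtype_val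
      · exact s.2.comp ((continuous_eval_const 0).comp
          (continuous_fst.comp continuous_subtype_val))

lemma rhoSection_spec (hs : s ≫ π = 𝟙 A) (p : (coneObj π).carrier) :
    (rhoHom π).1 (rhoSection π s p) = p := by
  apply Subtype.ext
  refine Prod.ext ?_ ?_
  · ext t
    show π.1 (s.1 (p.1.1 t) + (((1:ℝ) - (t : ℝ) : ℝ) : ℂ) • (p.1.2 - s.1 (p.1.1 0)))
      = p.1.1 t
    rw [map_add, map_smul, map_sub, pi_s_id π s hs, pi_s_id π s hs, ← p.2.2, sub_self,
      smul_zero, add_zero]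
  · show s.1 (p.1.1 0) + (((1:ℝ) - ((0 : unitInterval) : ℝ) : ℝ) : ℂ) •
      (p.1.2 - s.1 (p.1.1 0)) = p.1.2
    norm_num

lemma semiSplit_rho (hs : s ≫ π = 𝟙 A) : IsSemiSplit (rhoHom π) :=
  ⟨rhoSection π s, rhoSection_spec π s hs⟩

lemma ext_rho (hs : s ≫ π = 𝟙 A) : IsExtensionHom (inclKHom π) (rhoHom π) := by
  constructor
  · intro f g h
    apply Subtype.ext
    have h' := congrArg Subtype.val h
    exact h'
  · rw [range_inclK]
    exact isClosed_eq (rhoHom π).2 continuous_const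
  · exact fun p => ⟨rhoSection π s p, rhoSection_spec π s hs p⟩
  · rw [range_inclK]

/-- The contraction of `K`. -/
noncomputable def Hk : (Kobj π).carrier →ₙₐ[ℂ] C(unitInterval, (Kobj π).carrier) where
  toFun f := ⟨fun u => ⟨f.1.comp (ContinuousMap.curry rmul u), by
      constructor
      · show f.1 (rmul (u, 0)) = 0
        rw [rmul_zero_right]
        exact f.2.1
      · intro t
        exact f.2.2 _⟩, by
    apply Continuous.subtype_mk
    exact ContinuousMap.continuous_comp'.comp
      (((ContinuousMap.curry rmul).continuous).prodMk continuous_const)⟩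
  map_smul' c f := by ext u; apply Subtype.ext; ext t; rfl
  map_zero' := by ext u; apply Subtype.ext; ext t; rfl
  map_add' f g := by ext u; apply Subtype.ext; ext t; rfl
  map_mul' f g := by ext u; apply Subtype.ext; ext t; rfl

lemma continuous_Hk : Continuous (Hk π) := by
  apply ContinuousMap.continuous_of_continuous_uncurry
  apply Continuous.subtype_mk
  exact ContinuousMap.continuous_comp'.comp
    (((ContinuousMap.curry rmul).continuous.comp continuous_snd).prodMk
      (continuous_subtype_val.comp continuous_fst))

lemma homK : NAlgHomotopic (NonUnitalAlgHom.id ℂ (Kobj π).carrier) (zeroMor (Kobj π) (Kobj π)).1 := by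
  refine ⟨Hk π, continuous_Hk π, ?_, ?_⟩
  · intro f
    apply Subtype.ext; ext t
    show f.1 (rmul (0, t)) = _
    rw [rmul_zero_left]
    rfl
  · intro f
    apply Subtype.ext; ext t
    show f.1 (rmul (1, t)) = _
    rw [rmul_one_left, f.2.1]
    rfl

/-- The deformation retraction of `Y` onto the constant paths. -/
noncomputable def Hy : (Yobj π).carrier →ₙₐ[ℂ] C(unitInterval, (Yobj π).carrier) where
  toFun f := ⟨fun u => ⟨f.1.comp (ContinuousMap.curry rline u), by
      show π.1 (f.1 (rline (u, 1))) = 0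
      rw [rline_one_right]
      exact f.2⟩, by
    apply Continuous.subtype_mk
    exact ContinuousMap.continuous_comp'.comp
      (((ContinuousMap.curry rline).continuous).prodMk continuous_const)⟩
  map_smul' c f := by ext u; apply Subtype.ext; ext t; rfl
  map_zero' := by ext u; apply Subtype.ext; ext t; rfl
  map_add' f g := by ext u; apply Subtype.ext; ext t; rfl
  map_mul' f g := by ext u; apply Subtype.ext; ext t; rfl

lemma continuous_Hy : Continuous (Hy π) := by
  apply ContinuousMap.continuous_of_continuous_uncurry
  apply Continuous.subtype_mk
  exact ContinuousMap.continuous_comp'.comp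
    (((ContinuousMap.curry rline).continuous.comp continuous_snd).prodMk
      (continuous_subtype_val.comp continuous_fst))

lemma homY (hext : IsExtensionHom i π) :
    NAlgHomotopic (NonUnitalAlgHom.id ℂ (Yobj π).carrier)
      ((jHom i π hext).1.comp (ev1Hom i π hext).1) := by
  refine ⟨Hy π, continuous_Hy π, ?_, ?_⟩
  · intro f
    apply Subtype.ext; ext t
    show f.1 (rline (0, t)) = _
    rw [rline_zero_left]
    rfl
  · intro f
    apply Subtype.ext; ext t
    show f.1 (rline (1, t)) = i.1 ((ev1Hom i π hext).1 f)
    rw [rline_one_left, apply_ev1]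

/-- The nullhomotopy of `ι : ΣA → C_π` coming from the multiplicative section `s`. -/
noncomputable def Hiota (hs : s ≫ π = 𝟙 A) :
    (suspObj A).carrier →ₙₐ[ℂ] C(unitInterval, (coneObj π).carrier) where
  toFun f := ⟨fun u => ⟨(f.1.comp (ContinuousMap.curry rline u), s.1 (f.1 u)), by
      constructor
      · show f.1 (rline (u, 1)) = 0
        rw [rline_one_right]
        exact susp_apply_one f
      · show f.1 (rline (u, 0)) = π.1 (s.1 (f.1 u))
        rw [rline_zero_right, pi_s_id π s hs]⟩, by
    apply Continuous.subtype_mk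
    refine Continuous.prodMk ?_ ?_
    · exact ContinuousMap.continuous_comp'.comp
        (((ContinuousMap.curry rline).continuous).prodMk continuous_const)
    · exact s.2.comp (f.1.continuous)⟩
  map_smul' c f := by
    ext u; apply Subtype.ext; refine Prod.ext ?_ ?_
    · ext t; rfl
    · exact map_smul s.1 c (f.1 u)
  map_zero' := by
    ext u; apply Subtype.ext; refine Prod.ext ?_ ?_
    · ext t; rfl
    · exact map_zero s.1
  map_add' f g := by
    ext u; apply Subtype.ext; refine Prod.ext ?_ ?_
    · ext t; rfl
    · exact map_add s.1 (f.1 u) (g.1 u)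
  map_mul' f g := by
    ext u; apply Subtype.ext; refine Prod.ext ?_ ?_
    · ext t; rfl
    · exact map_mul s.1 (f.1 u) (g.1 u)

lemma continuous_Hiota (hs : s ≫ π = 𝟙 A) : Continuous (Hiota π s hs) := by
  apply ContinuousMap.continuous_of_continuous_uncurry
  apply Continuous.subtype_mk
  refine Continuous.prodMk ?_ ?_
  · exact ContinuousMap.continuous_comp'.comp
      (((ContinuousMap.curry rline).continuous.comp continuous_snd).prodMk
        (continuous_subtype_val.comp continuous_fst))
  · exact s.2.comp (ContinuousEval.continuous_eval.comp
      ((continuous_subtype_val.comp continuous_fst).prodMk continuous_snd))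

lemma homIota (hs : s ≫ π = 𝟙 A) :
    NAlgHomotopic (coneIotaHom π).1 (zeroMor (suspObj A) (coneObj π)).1 := by
  refine ⟨Hiota π s hs, continuous_Hiota π s hs, ?_, ?_⟩
  · intro f
    apply Subtype.ext; refine Prod.ext ?_ ?_
    · ext t
      show f.1 (rline (0, t)) = f.1 t
      rw [rline_zero_left]
    · show s.1 (f.1 0) = 0
      rw [susp_apply_zero f, map_zero]
  · intro f
    apply Subtype.ext; refine Prod.ext ?_ ?_
    · ext t
      show f.1 (rline (1, t)) = 0
      rw [rline_one_left]
      exact susp_apply_one f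
    · show s.1 (f.1 1) = 0
      rw [susp_apply_one f, map_zero]

section Flevel

open CategoryTheory Limits

variable {𝒞 : Type*} [Category 𝒞] [Preadditive 𝒞] (F : BanAlg ⥤ 𝒞)

lemma Fiota_zero (hhtp : HomotopyInvariant F) (hhe : HalfExactFunctor F)
    (hs : s ≫ π = 𝟙 A) : F.map (coneIotaHom π) = 0 := by
  have h1 : F.map (coneIotaHom π) = F.map (zeroMor (suspObj A) (coneObj π)) :=
    hhtp _ _ _ _ (homIota π s hs)
  rw [h1]
  exact map_zeroMor F hhe _ _

lemma id_FK_zero (hhtp : HomotopyInvariant F) (hhe : HalfExactFunctor F) :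
    (𝟙 (F.obj (Kobj π)) : F.obj (Kobj π) ⟶ F.obj (Kobj π)) = 0 := by
  have h1 : F.map (𝟙 (Kobj π)) = F.map (zeroMor (Kobj π) (Kobj π)) :=
    hhtp _ _ _ _ (homK π)
  rw [F.map_id] at h1
  rw [h1]
  exact map_zeroMor F hhe _ _

lemma FinclK_zero (hhtp : HomotopyInvariant F) (hhe : HalfExactFunctor F) :
    F.map (inclKHom π) = 0 := by
  rw [← Category.id_comp (F.map (inclKHom π)), id_FK_zero π F hhtp hhe, Limits.zero_comp]

lemma mono_Feps (hhtp : HomotopyInvariant F) (hhe : HalfExactFunctor F)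
    (hs : s ≫ π = 𝟙 A) : Mono (F.map (epsHom π)) := by
  apply Preadditive.mono_of_cancel_zero
  intro X g hg
  have h := (hhe _ _ _ (coneIotaHom π) (epsHom π) (ext_eps π) (semiSplit_eps π) X).1
  obtain ⟨v, hv⟩ := (h g).1 hg
  rw [← hv]
  show v ≫ F.map (coneIotaHom π) = 0
  rw [Fiota_zero π s F hhtp hhe hs, Limits.comp_zero]

lemma mono_Frho (hhtp : HomotopyInvariant F) (hhe : HalfExactFunctor F)
    (hs : s ≫ π = 𝟙 A) : Mono (F.map (rhoHom π)) := by
  apply Preadditive.mono_of_cancel_zero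
  intro X g hg
  have h := (hhe _ _ _ (inclKHom π) (rhoHom π) (ext_rho π s hs) (semiSplit_rho π s hs) X).1
  obtain ⟨v, hv⟩ := (h g).1 hg
  rw [← hv]
  show v ≫ F.map (inclKHom π) = 0
  rw [FinclK_zero π F hhtp hhe, Limits.comp_zero]

lemma iso_Fj (hhtp : HomotopyInvariant F) (hext : IsExtensionHom i π) :
    IsIso (F.map (jHom i π hext)) := by
  refine ⟨F.map (ev1Hom i π hext), ?_, ?_⟩
  · rw [← F.map_comp, j_comp_ev1, F.map_id]
  · rw [← F.map_comp]
    have h : F.map (𝟙 (Yobj π)) = F.map (ev1Hom i π hext ≫ jHom i π hext) :=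
      hhtp _ _ _ _ (homY i π hext)
    rw [← h, F.map_id]

lemma mono_Fi (hhtp : HomotopyInvariant F) (hhe : HalfExactFunctor F)
    (hext : IsExtensionHom i π) (hs : s ≫ π = 𝟙 A) : Mono (F.map i) := by
  have hfac : F.map i = F.map (jHom i π hext) ≫ F.map (rhoHom π) ≫ F.map (epsHom π) := by
    rw [← F.map_comp, ← F.map_comp, j_rho_eps i π hext]
  rw [hfac]
  haveI := iso_Fj i π F hhtp hext
  haveI := mono_Frho π s F hhtp hhe hs
  haveI := mono_Feps π s F hhtp hhe hs
  infer_instance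

end Flevel

end Main

end SEP

/-!
STATEMENT 17 (Split-exactness).  Let `F` be a functor from `BanAlg` into an additive
category which is homotopy invariant and half-exact for semi-split extensions.  Then `F` is
split-exact: for every extension `B ↣ᶦ D ↠^π A` admitting a continuous homomorphism
`σ : A → D` with `π ∘ σ = id`, the morphism `F(i) ⊕ F(σ) : F(B) ⊕ F(A) → F(D)` from the
biproduct is an isomorphism.
-/
theorem splitExact_of_halfexact_homotopyInvariant
    {𝒞 : Type*} [Category 𝒞] [Preadditive 𝒞] [Limits.HasBinaryBiproducts 𝒞]
    (F : BanAlg ⥤ 𝒞)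
    (hhtp : HomotopyInvariant F) (hhe : HalfExactFunctor F) :
    SplitExactFunctor F := by
  intro B D A i π s hext hs
  open CategoryTheory Limits in
  have hFsπ : F.map s ≫ F.map π = 𝟙 (F.obj A) := by rw [← F.map_comp, hs, F.map_id]
  have hFiπ : F.map i ≫ F.map π = 0 := by
    rw [← F.map_comp]
    exact SEP.map_eq_zero_of_zero F hhe _ (fun b => SEP.pi_i_zero i π hext b)
  obtain ⟨r, hr⟩ : ∃ r : F.obj D ⟶ F.obj B,
      r ≫ F.map i = 𝟙 (F.obj D) - F.map π ≫ F.map s := by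
    have h := (hhe B D A i π hext (SEP.semiSplit_pi π s hs) (F.obj D)).1
    refine (h (𝟙 (F.obj D) - F.map π ≫ F.map s)).1 ?_
    show (𝟙 (F.obj D) - F.map π ≫ F.map s) ≫ F.map π = 0
    rw [Preadditive.sub_comp, Category.id_comp, Category.assoc, hFsπ,
      Category.comp_id, sub_self]
  have hψφ : Limits.biprod.lift r (F.map π) ≫ Limits.biprod.desc (F.map i) (F.map s)
      = 𝟙 (F.obj D) := by
    rw [Limits.biprod.lift_desc, hr, sub_add_cancel]
  haveI hmonoFi : CategoryTheory.Mono (F.map i) := SEP.mono_Fi i π s F hhtp hhe hext hs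
  have h2 : Limits.biprod.desc (F.map i) (F.map s) ≫ F.map π = Limits.biprod.snd := by
    apply Limits.biprod.hom_ext'
    · rw [← Category.assoc, Limits.biprod.inl_desc, hFiπ, Limits.biprod.inl_snd]
    · rw [← Category.assoc, Limits.biprod.inr_desc, hFsπ, Limits.biprod.inr_snd]
  haveI hmono : CategoryTheory.Mono (Limits.biprod.desc (F.map i) (F.map s)) := by
    apply CategoryTheory.Preadditive.mono_of_cancel_zero
    intro X t ht
    have hsnd : t ≫ Limits.biprod.snd = 0 := by
      rw [← h2, ← Category.assoc, ht, Limits.zero_comp]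
    have hsum : t ≫ Limits.biprod.desc (F.map i) (F.map s)
        = (t ≫ Limits.biprod.fst) ≫ F.map i + (t ≫ Limits.biprod.snd) ≫ F.map s := by
      conv_lhs => rw [← Category.comp_id t, ← Limits.biprod.total]
      simp only [Preadditive.comp_add, Preadditive.add_comp, Category.assoc,
        Limits.biprod.inl_desc, Limits.biprod.inr_desc]
    have hfst : (t ≫ Limits.biprod.fst) ≫ F.map i = 0 := by
      have := hsum.symm.trans ht
      rwa [hsnd, Limits.zero_comp, add_zero] at this
    have h1 : t ≫ Limits.biprod.fst = 0 := Limits.zero_of_comp_mono (F.map i) hfst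
    apply Limits.biprod.hom_ext
    · rw [h1, Limits.zero_comp]
    · rw [hsnd, Limits.zero_comp]
  have hφψ : Limits.biprod.desc (F.map i) (F.map s) ≫ Limits.biprod.lift r (F.map π)
      = 𝟙 _ := by
    rw [← CategoryTheory.cancel_mono (Limits.biprod.desc (F.map i) (F.map s)),
      Category.assoc, hψφ, Category.comp_id, Category.id_comp]
  exact ⟨Limits.biprod.lift r (F.map π), hφψ, hψφ⟩
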